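/- Let s > 0. The Hausdorff content in dimension s is upper semicontinuous with respect to Gromov–Hausdorff convergence of compact metric spaces: if K_α (α ∈ ℕ) and K are compact metric spaces with Gromov–Hausdorff distance d_GH(K_α, K) → 0, then limsup_{α→∞} H^s_∞(K_α) ≤ H^s_∞(K), where H^s_∞ of a compact metric space denotes the Hausdorff content of the whole space. -/

import Mathlib

open Metric Filter Set
open scoped ENNReal

/-- `ω_s = π^{s/2}/Γ(s/2+1)`. -/
noncomputable def omegaVol (s : ℝ) : ℝ := Real.pi ^ (s / 2) / Real.Gamma (s / 2 + 1)

/-- The `s`-dimensional Hausdorff content of a whole metric space: the infimum of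
`Σ_i ω_s r_i^s` over countable covers of the space by open balls `B_{r_i}(x_i)`. -/
noncomputable def hausdorffContent (s : ℝ) (K : Type*) [MetricSpace K] : ℝ≥0∞ :=
  ⨅ (c : ℕ → K × ℝ) (_ : ∀ i, 0 < (c i).2)
    (_ : (Set.univ : Set K) ⊆ ⋃ i, ball (c i).1 (c i).2),
    ∑' i, ENNReal.ofReal (omegaVol s * (c i).2 ^ s)

lemma omegaVol_pos {s : ℝ} (hs : 0 < s) : 0 < omegaVol s :=
  div_pos (Real.rpow_pos_of_pos Real.pi_pos _) (Real.Gamma_pos_of_pos (by linarith))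

lemma hausdorffContent_le_of_cover (s : ℝ) (X : Type*) [MetricSpace X] (c : ℕ → X × ℝ)
    (h1 : ∀ i, 0 < (c i).2) (h2 : (Set.univ : Set X) ⊆ ⋃ i, ball (c i).1 (c i).2) :
    hausdorffContent s X ≤ ∑' i, ENNReal.ofReal (omegaVol s * (c i).2 ^ s) :=
  iInf_le_of_le c (iInf_le_of_le h1 (iInf_le _ h2))

lemma cover_transfer (X L : Type*) [MetricSpace X] [CompactSpace X] [Nonempty X]
    [MetricSpace L] [CompactSpace L] [Nonempty L] {δ : ℝ}
    (h : GromovHausdorff.ghDist X L < δ) (c : ℕ → L × ℝ) (t : Finset ℕ)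
    (hcov : (Set.univ : Set L) ⊆ ⋃ i ∈ t, ball (c i).1 (c i).2) :
    ∃ y : ℕ → X, (Set.univ : Set X) ⊆ ⋃ i ∈ t, ball (y i) ((c i).2 + 2 * δ) := by
  set Φ := GromovHausdorff.optimalGHInjl X L
  set Ψ := GromovHausdorff.optimalGHInjr X L
  have hΦ : Isometry Φ := GromovHausdorff.isometry_optimalGHInjl X L
  have hΨ : Isometry Ψ := GromovHausdorff.isometry_optimalGHInjr X L
  have hne : EMetric.hausdorffEdist (range Φ) (range Ψ) ≠ ⊤ :=
    hausdorffEdist_ne_top_of_nonempty_of_bounded (range_nonempty _) (range_nonempty _)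
      (isCompact_range hΦ.continuous).isBounded (isCompact_range hΨ.continuous).isBounded
  have hd : hausdorffDist (range Φ) (range Ψ) < δ := by
    rw [GromovHausdorff.hausdorffDist_optimal]; exact h
  have hd' : hausdorffDist (range Ψ) (range Φ) < δ := by rwa [hausdorffDist_comm] at hd
  -- choose approximating centers
  have hy : ∀ i : ℕ, ∃ x : X, dist (Ψ (c i).1) (Φ x) < δ := by
    intro i
    obtain ⟨z, ⟨x, rfl⟩, hz⟩ :=
      exists_dist_lt_of_hausdorffDist_lt (mem_range_self ((c i).1)) hd'
        (by rw [EMetric.hausdorffEdist_comm]; exact hne)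
    exact ⟨x, hz⟩
  choose y hy using hy
  refine ⟨y, fun z _ => ?_⟩
  obtain ⟨w, ⟨x', rfl⟩, hw⟩ :=
    exists_dist_lt_of_hausdorffDist_lt (mem_range_self z) hd hne
  have := hcov (mem_univ x')
  simp only [mem_iUnion, mem_ball] at this
  obtain ⟨i, hit, hxi⟩ := this
  have hdz : dist z (y i) < (c i).2 + 2 * δ := by
    have h1 : dist z (y i) = dist (Φ z) (Φ (y i)) := (hΦ.dist_eq _ _).symm
    have h2 : dist (Φ z) (Φ (y i)) ≤
        dist (Φ z) (Ψ x') + dist (Ψ x') (Ψ (c i).1) + dist (Ψ (c i).1) (Φ (y i)) :=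
      dist_triangle4 _ _ _ _
    rw [hΨ.dist_eq] at h2
    rw [h1]
    have := hy i
    linarith
  simp only [mem_iUnion, mem_ball]
  exact ⟨i, hit, hdz⟩

/-- Upper semicontinuity of the Hausdorff content with respect to Gromov–Hausdorff
convergence of compact metric spaces. -/
theorem hausdorffContent_limsup_le_of_ghDist_tendsto_zero (s : ℝ) (hs : 0 < s)
    (K : ℕ → Type) [∀ α, MetricSpace (K α)] [∀ α, CompactSpace (K α)] [∀ α, Nonempty (K α)]
    (L : Type) [MetricSpace L] [CompactSpace L] [Nonempty L]
    (hconv : Tendsto (fun α => GromovHausdorff.ghDist (K α) L) atTop (nhds 0)) :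
    Filter.limsup (fun α => hausdorffContent s (K α)) atTop ≤ hausdorffContent s L := by
  have hω : 0 < omegaVol s := omegaVol_pos hs
  apply ENNReal.le_of_forall_pos_le_add
  intro ε hε hM
  set e : ℝ := (ε : ℝ) / 3 with he_def
  have he : 0 < e := by positivity
  -- extract a nearly optimal cover of L
  obtain ⟨c, hcpos, hccov, hS⟩ : ∃ c : ℕ → L × ℝ, (∀ i, 0 < (c i).2) ∧
      ((Set.univ : Set L) ⊆ ⋃ i, ball (c i).1 (c i).2) ∧
      ∑' i, ENNReal.ofReal (omegaVol s * (c i).2 ^ s) <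
        hausdorffContent s L + ENNReal.ofReal e := by
    have h1 : hausdorffContent s L < hausdorffContent s L + ENNReal.ofReal e :=
      ENNReal.lt_add_right hM.ne (by simpa [ENNReal.ofReal_pos] using he)
    conv_lhs at h1 => rw [hausdorffContent]
    simp only [iInf_lt_iff] at h1
    obtain ⟨c, h2, h3, h4⟩ := h1
    exact ⟨c, h2, h3, h4⟩
  -- finite subcover
  obtain ⟨t, htcov⟩ := isCompact_univ.elim_finite_subcover
    (fun i => ball (c i).1 (c i).2) (fun i => isOpen_ball) hccov
  -- choose δ > 0 by continuity
  set A : ℝ := ∑ i ∈ t, omegaVol s * (c i).2 ^ s with hA_def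
  set f : ℝ → ℝ := fun δ => ∑ i ∈ t, omegaVol s * ((c i).2 + 2 * δ) ^ s with hf_def
  have hf0 : f 0 = A := by simp [hf_def, hA_def]
  have hfc : Continuous f := by
    apply continuous_finset_sum
    intro i _
    exact continuous_const.mul ((Real.continuous_rpow_const hs.le).comp (by continuity))
  have hfev : ∀ᶠ δ in nhds (0:ℝ), f δ < A + e := by
    have ht : Tendsto f (nhds 0) (nhds A) := hf0 ▸ hfc.continuousAt
    exact ht.eventually_lt_const (by linarith)
  obtain ⟨δ₀, hδ₀, hδ₀f⟩ := Metric.eventually_nhds_iff.1 hfev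
  set δ : ℝ := δ₀ / 2 with hδ_def
  have hδ : 0 < δ := by positivity
  have hfδ : f δ ≤ A + e := by
    apply le_of_lt
    apply hδ₀f
    simp only [dist_zero_right, Real.norm_eq_abs, abs_of_pos hδ]
    linarith
  -- eventually ghDist < δ
  have hev : ∀ᶠ α in atTop, GromovHausdorff.ghDist (K α) L < δ :=
    hconv.eventually_lt_const hδ
  refine limsup_le_of_le (by isBoundedDefault) ?_
  filter_upwards [hev] with α hα
  obtain ⟨y, hycov⟩ := cover_transfer (K α) L hα c t htcov
  -- padded cover of K α
  set ρ : ℕ → ℝ := fun i => (e * (1/2) ^ (i+1) / omegaVol s) ^ (1/s) with hρ_def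
  have hρpos : ∀ i, 0 < ρ i := fun i =>
    Real.rpow_pos_of_pos (by positivity) _
  have hρval : ∀ i, omegaVol s * ρ i ^ s = e * (1/2) ^ (i+1) := by
    intro i
    have hx : (0:ℝ) ≤ e * (1/2) ^ (i+1) / omegaVol s := by positivity
    simp only [hρ_def]
    rw [← Real.rpow_natCast _ (i+1)]  -- no-op guard
    rw [Real.rpow_natCast]
    rw [← Real.rpow_mul hx, one_div_mul_cancel hs.ne', Real.rpow_one]
    field_simp
  set z₀ : K α := Classical.arbitrary (K α)
  set g : ℕ → K α × ℝ := fun i => if i ∈ t then (y i, (c i).2 + 2 * δ) else (z₀, ρ i) with hg_def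
  have hgpos : ∀ i, 0 < (g i).2 := by
    intro i
    by_cases hi : i ∈ t <;> simp [hg_def, hi, hρpos i]
    · linarith [hcpos i]
  have hgcov : (Set.univ : Set (K α)) ⊆ ⋃ i, ball (g i).1 (g i).2 := by
    intro z hz
    have := hycov hz
    simp only [mem_iUnion, mem_ball] at this ⊢
    obtain ⟨i, hit, hd⟩ := this
    exact ⟨i, by simp [hg_def, hit, hd]⟩
  have key := hausdorffContent_le_of_cover s (K α) g hgpos hgcov
  -- bound the sum
  have hnn : ∀ i, (0:ℝ) ≤ omegaVol s * ((c i).2 + 2*δ) ^ s := fun i =>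
    mul_nonneg hω.le (Real.rpow_nonneg (by linarith [hcpos i]) _)
  have hnn' : ∀ i, (0:ℝ) ≤ omegaVol s * (c i).2 ^ s := fun i =>
    mul_nonneg hω.le (Real.rpow_nonneg (hcpos i).le _)
  have hnn'' : ∀ i : ℕ, (0:ℝ) ≤ e * (1/2) ^ (i+1) := fun i =>
    mul_nonneg he.le (by positivity)
  have hAnn : (0:ℝ) ≤ A := Finset.sum_nonneg fun i _ => hnn' i
  have hsum : ∑' i, ENNReal.ofReal (omegaVol s * (g i).2 ^ s) ≤
      ENNReal.ofReal (f δ) + ENNReal.ofReal e := by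
    have hterm : ∀ i, ENNReal.ofReal (omegaVol s * (g i).2 ^ s) ≤
        (if i ∈ t then ENNReal.ofReal (omegaVol s * ((c i).2 + 2*δ) ^ s) else 0)
          + ENNReal.ofReal (e * (1/2) ^ (i+1)) := by
      intro i
      by_cases hi : i ∈ t
      · simp only [hg_def, hi, if_pos]
        exact le_add_of_le_of_nonneg (le_refl _) zero_le
      · simp only [hg_def, hi, if_neg, if_false]
        rw [hρval i]
        exact le_add_of_nonneg_of_le zero_le (le_refl _)
    calc ∑' i, ENNReal.ofReal (omegaVol s * (g i).2 ^ s)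
        ≤ ∑' i, ((if i ∈ t then ENNReal.ofReal (omegaVol s * ((c i).2 + 2*δ) ^ s) else 0)
          + ENNReal.ofReal (e * (1/2) ^ (i+1))) := ENNReal.tsum_le_tsum hterm
      _ = (∑' i, (if i ∈ t then ENNReal.ofReal (omegaVol s * ((c i).2 + 2*δ) ^ s) else 0))
          + ∑' i, ENNReal.ofReal (e * (1/2) ^ (i+1)) := ENNReal.tsum_add
      _ ≤ ENNReal.ofReal (f δ) + ENNReal.ofReal e := by
          gcongr
          · rw [tsum_eq_sum (s := t) (fun i hi => if_neg hi)]
            have heq : ∑ i ∈ t, (if i ∈ t then ENNReal.ofReal (omegaVol s * ((c i).2 + 2*δ) ^ s) else 0)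
                = ∑ i ∈ t, ENNReal.ofReal (omegaVol s * ((c i).2 + 2*δ) ^ s) :=
              Finset.sum_congr rfl fun i hi => if_pos hi
            rw [heq, ← ENNReal.ofReal_sum_of_nonneg (fun i _ => hnn i)]
          · have hfe : (fun i : ℕ => e * (1/2:ℝ) ^ (i+1)) = fun i => (e * (1/2)) * (1/2:ℝ) ^ i := by
              funext i; ring
            have hsumm : Summable (fun i : ℕ => e * (1/2:ℝ) ^ (i+1)) := by
              rw [hfe]
              exact (summable_geometric_of_lt_one (by norm_num) (by norm_num)).mul_left _
            rw [← ENNReal.ofReal_tsum_of_nonneg hnn'' hsumm]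
            apply ENNReal.ofReal_le_ofReal
            have hg : ∑' i : ℕ, e * (1/2:ℝ) ^ (i+1) = e := by
              rw [hfe, tsum_mul_left, tsum_geometric_of_lt_one (by norm_num) (by norm_num),
                show ((1:ℝ)-1/2)⁻¹ = 2 by norm_num]
              ring
            rw [hg]
  -- combine
  have hAbound : ENNReal.ofReal A ≤ ∑' i, ENNReal.ofReal (omegaVol s * (c i).2 ^ s) := by
    rw [hA_def, ENNReal.ofReal_sum_of_nonneg (fun i _ => hnn' i)]
    exact ENNReal.sum_le_tsum t
  calc hausdorffContent s (K α)
      ≤ ENNReal.ofReal (f δ) + ENNReal.ofReal e := key.trans hsum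
    _ ≤ ENNReal.ofReal (A + e) + ENNReal.ofReal e := add_le_add_left (ENNReal.ofReal_le_ofReal hfδ) _
    _ = ENNReal.ofReal A + ENNReal.ofReal e + ENNReal.ofReal e := by
        rw [ENNReal.ofReal_add hAnn he.le]
    _ ≤ hausdorffContent s L + ENNReal.ofReal e + ENNReal.ofReal e + ENNReal.ofReal e := by
        gcongr
        exact hAbound.trans hS.le
    _ = hausdorffContent s L + ENNReal.ofReal (e + e + e) := by
        rw [ENNReal.ofReal_add (by linarith) he.le, ENNReal.ofReal_add he.le he.le]
        ring
    _ = hausdorffContent s L + ε := by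
        congr 1
        have : e + e + e = (ε : ℝ) := by rw [he_def]; ring
        rw [this, ENNReal.ofReal_coe_nnreal]
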